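/- Let k be a commutative ring with sfli k < ∞ and let G be a group. Then every Gorenstein flat kG-module is Gorenstein flat when restricted to a k-module, and every PGF kG-module is PGF when restricted to a k-module. -/

import Mathlib

open TensorProduct

universe u v w

section Tensor

variable (R : Type u) [Ring R]

/-- The subgroup of relations defining `I ⊗_R N` as a quotient of `I ⊗_ℤ N`,
where `I` is a right `R`-module and `N` is a left `R`-module. -/
noncomputable def rTensorRel (I : Type v) [AddCommGroup I] [Module Rᵐᵒᵖ I]
    (N : Type v) [AddCommGroup N] [Module R N] : AddSubgroup (I ⊗[ℤ] N) :=
  AddSubgroup.closure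
    {x | ∃ (r : R) (a : I) (n : N), x = (MulOpposite.op r • a) ⊗ₜ[ℤ] n - a ⊗ₜ[ℤ] (r • n)}

/-- The tensor product `I ⊗_R N` of a right `R`-module `I` and a left `R`-module `N`
over a (possibly noncommutative) ring `R`, as an abelian group. -/
noncomputable def RTensor (I : Type v) [AddCommGroup I] [Module Rᵐᵒᵖ I]
    (N : Type v) [AddCommGroup N] [Module R N] : Type v :=
  (I ⊗[ℤ] N) ⧸ rTensorRel R I N

noncomputable instance (I : Type v) [AddCommGroup I] [Module Rᵐᵒᵖ I]
    (N : Type v) [AddCommGroup N] [Module R N] : AddCommGroup (RTensor R I N) :=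
  inferInstanceAs (AddCommGroup ((I ⊗[ℤ] N) ⧸ rTensorRel R I N))

/-- Functoriality of `RTensor` in the second variable. -/
noncomputable def RTensor.map (I : Type v) [AddCommGroup I] [Module Rᵐᵒᵖ I]
    {N N' : Type v} [AddCommGroup N] [Module R N] [AddCommGroup N'] [Module R N']
    (f : N →ₗ[R] N') : RTensor R I N →+ RTensor R I N' :=
  QuotientAddGroup.map _ _
    (TensorProduct.map (LinearMap.id : I →ₗ[ℤ] I) f.toAddMonoidHom.toIntLinearMap).toAddMonoidHom
    (by
      refine (AddSubgroup.closure_le _).2 ?_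
      rintro x ⟨r, a, n, rfl⟩
      refine AddSubgroup.mem_comap.2 (AddSubgroup.subset_closure ⟨r, a, f n, ?_⟩)
      simp [map_sub, TensorProduct.map_tmul])

/-- Functoriality of `RTensor` in the first variable. -/
noncomputable def RTensor.mapLeft {I I' : Type v} [AddCommGroup I] [Module Rᵐᵒᵖ I]
    [AddCommGroup I'] [Module Rᵐᵒᵖ I'] (f : I →ₗ[Rᵐᵒᵖ] I')
    (N : Type v) [AddCommGroup N] [Module R N] : RTensor R I N →+ RTensor R I' N :=
  QuotientAddGroup.map _ _
    (TensorProduct.map f.toAddMonoidHom.toIntLinearMap (LinearMap.id : N →ₗ[ℤ] N)).toAddMonoidHom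
    (by
      refine (AddSubgroup.closure_le _).2 ?_
      rintro x ⟨r, a, n, rfl⟩
      refine AddSubgroup.mem_comap.2 (AddSubgroup.subset_closure ⟨r, f a, n, ?_⟩)
      simp [map_sub, TensorProduct.map_tmul])

/-- Flatness of a left module over a possibly noncommutative ring: tensoring with `M`
preserves injectivity of maps of right `R`-modules. -/
def ModFlat (M : Type v) [AddCommGroup M] [Module R M] : Prop :=
  ∀ (I I' : ModuleCat.{v} Rᵐᵒᵖ) (f : I →ₗ[Rᵐᵒᵖ] I'), Function.Injective f →
    Function.Injective (RTensor.mapLeft R f M)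

end Tensor
section Resolutions

variable (R : Type u) [Ring R]

/-- A complete flat resolution: an acyclic complex of flat left `R`-modules that remains
acyclic after applying `I ⊗_R -` for every injective right `R`-module `I`. -/
structure CompleteFlatResolution where
  F : ℤ → ModuleCat.{v} R
  d : ∀ n : ℤ, F (n + 1) →ₗ[R] F n
  flat : ∀ n, ModFlat R (F n)
  acyclic : ∀ n, Function.Exact (d (n + 1)) (d n)
  tensor_acyclic : ∀ (I : ModuleCat.{v} Rᵐᵒᵖ), Module.Injective Rᵐᵒᵖ I →
    ∀ n, Function.Exact (RTensor.map R I (d (n + 1))) (RTensor.map R I (d n))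

/-- A left `R`-module is Gorenstein flat if it is a syzygy of a complete flat resolution. -/
def IsGorensteinFlat (M : Type v) [AddCommGroup M] [Module R M] : Prop :=
  ∃ (C : CompleteFlatResolution.{u, v} R) (n : ℤ),
    Nonempty (M ≃ₗ[R] LinearMap.range (C.d n))

/-- A totally acyclic complex of projectives: an acyclic complex of projective left `R`-modules
`P` such that `Hom_R(P, Q)` is acyclic for every projective `R`-module `Q`. -/
structure CompleteProjectiveResolution where
  F : ℤ → ModuleCat.{v} R
  d : ∀ n : ℤ, F (n + 1) →ₗ[R] F n
  projective : ∀ n, Module.Projective R (F n)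
  acyclic : ∀ n, Function.Exact (d (n + 1)) (d n)
  hom_acyclic : ∀ (Q : ModuleCat.{v} R), Module.Projective R Q →
    ∀ n, Function.Exact (fun g : ↥(F n) →ₗ[R] ↥Q => g.comp (d n))
      (fun g : ↥(F (n + 1)) →ₗ[R] ↥Q => g.comp (d (n + 1)))

/-- A left `R`-module is Gorenstein projective if it is a syzygy of a totally acyclic
complex of projectives. -/
def IsGorensteinProjective (M : Type v) [AddCommGroup M] [Module R M] : Prop :=
  ∃ (C : CompleteProjectiveResolution.{u, v} R) (n : ℤ),
    Nonempty (M ≃ₗ[R] LinearMap.range (C.d n))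

/-- An acyclic complex of projective left `R`-modules that remains acyclic after applying
`I ⊗_R -` for every injective right `R`-module `I`. -/
structure PGFResolution where
  F : ℤ → ModuleCat.{v} R
  d : ∀ n : ℤ, F (n + 1) →ₗ[R] F n
  projective : ∀ n, Module.Projective R (F n)
  acyclic : ∀ n, Function.Exact (d (n + 1)) (d n)
  tensor_acyclic : ∀ (I : ModuleCat.{v} Rᵐᵒᵖ), Module.Injective Rᵐᵒᵖ I →
    ∀ n, Function.Exact (RTensor.map R I (d (n + 1))) (RTensor.map R I (d n))

/-- A left `R`-module is projectively coresolved Gorenstein flat (PGF) if it is a syzygy of an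
acyclic complex of projectives that stays acyclic under `I ⊗_R -` for every injective right
module `I`. -/
def IsPGF (M : Type v) [AddCommGroup M] [Module R M] : Prop :=
  ∃ (C : PGFResolution.{u, v} R) (n : ℤ),
    Nonempty (M ≃ₗ[R] LinearMap.range (C.d n))

/-- A complete injective resolution: an acyclic complex of injective left `R`-modules `I` such
that `Hom_R(J, I)` is acyclic for every injective `R`-module `J`. -/
structure CompleteInjectiveResolution where
  F : ℤ → ModuleCat.{v} R
  d : ∀ n : ℤ, F (n + 1) →ₗ[R] F n
  injective : ∀ n, Module.Injective R (F n)
  acyclic : ∀ n, Function.Exact (d (n + 1)) (d n)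
  hom_acyclic : ∀ (J : ModuleCat.{v} R), Module.Injective R J →
    ∀ n, Function.Exact (fun g : ↥J →ₗ[R] ↥(F (n + 1 + 1)) => (d (n + 1)).comp g)
      (fun g : ↥J →ₗ[R] ↥(F (n + 1)) => (d n).comp g)

/-- A left `R`-module is Gorenstein injective if it is a syzygy of a complete injective
resolution. -/
def IsGorensteinInjective (M : Type v) [AddCommGroup M] [Module R M] : Prop :=
  ∃ (C : CompleteInjectiveResolution.{u, v} R) (n : ℤ),
    Nonempty (M ≃ₗ[R] LinearMap.range (C.d n))

/-- `M` admits a resolution of length at most `n` by flat modules. -/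
def FlatDimLE (M : Type v) [AddCommGroup M] [Module R M] (n : ℕ) : Prop :=
  ∃ (F : ℕ → ModuleCat.{v} R) (d : ∀ i, F (i + 1) →ₗ[R] F i) (ε : F 0 →ₗ[R] M),
    (∀ i, ModFlat R (F i)) ∧ Function.Surjective ε ∧ Function.Exact (d 0) ε ∧
    (∀ i, Function.Exact (d (i + 1)) (d i)) ∧ ∀ i, n < i → ∀ x : F i, x = 0

/-- The flat dimension of a module, valued in `ℕ∞`. -/
noncomputable def FlatDim (M : Type v) [AddCommGroup M] [Module R M] : ℕ∞ :=
  sInf {d : ℕ∞ | ∃ n : ℕ, d = n ∧ FlatDimLE R M n}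

/-- `M` admits a resolution of length at most `n` by projective modules. -/
def ProjDimLE (M : Type v) [AddCommGroup M] [Module R M] (n : ℕ) : Prop :=
  ∃ (F : ℕ → ModuleCat.{v} R) (d : ∀ i, F (i + 1) →ₗ[R] F i) (ε : F 0 →ₗ[R] M),
    (∀ i, Module.Projective R (F i)) ∧ Function.Surjective ε ∧ Function.Exact (d 0) ε ∧
    (∀ i, Function.Exact (d (i + 1)) (d i)) ∧ ∀ i, n < i → ∀ x : F i, x = 0

/-- The projective dimension of a module, valued in `ℕ∞`. -/
noncomputable def ProjDim (M : Type v) [AddCommGroup M] [Module R M] : ℕ∞ :=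
  sInf {d : ℕ∞ | ∃ n : ℕ, d = n ∧ ProjDimLE R M n}

/-- `M` admits a resolution of length at most `n` by Gorenstein flat modules. -/
def GorensteinFlatDimLE (M : Type v) [AddCommGroup M] [Module R M] (n : ℕ) : Prop :=
  ∃ (F : ℕ → ModuleCat.{v} R) (d : ∀ i, F (i + 1) →ₗ[R] F i) (ε : F 0 →ₗ[R] M),
    (∀ i, IsGorensteinFlat R (F i)) ∧ Function.Surjective ε ∧ Function.Exact (d 0) ε ∧
    (∀ i, Function.Exact (d (i + 1)) (d i)) ∧ ∀ i, n < i → ∀ x : F i, x = 0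

/-- The Gorenstein flat dimension of a module, valued in `ℕ∞`. -/
noncomputable def GorensteinFlatDim (M : Type v) [AddCommGroup M] [Module R M] : ℕ∞ :=
  sInf {d : ℕ∞ | ∃ n : ℕ, d = n ∧ GorensteinFlatDimLE R M n}

/-- `M` admits a resolution of length at most `n` by Gorenstein projective modules. -/
def GorensteinProjDimLE (M : Type v) [AddCommGroup M] [Module R M] (n : ℕ) : Prop :=
  ∃ (F : ℕ → ModuleCat.{v} R) (d : ∀ i, F (i + 1) →ₗ[R] F i) (ε : F 0 →ₗ[R] M),
    (∀ i, IsGorensteinProjective R (F i)) ∧ Function.Surjective ε ∧ Function.Exact (d 0) ε ∧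
    (∀ i, Function.Exact (d (i + 1)) (d i)) ∧ ∀ i, n < i → ∀ x : F i, x = 0

/-- The Gorenstein projective dimension of a module, valued in `ℕ∞`. -/
noncomputable def GorensteinProjDim (M : Type v) [AddCommGroup M] [Module R M] : ℕ∞ :=
  sInf {d : ℕ∞ | ∃ n : ℕ, d = n ∧ GorensteinProjDimLE R M n}

/-- `sfli R`: the supremum of the flat dimensions of injective left `R`-modules. -/
noncomputable def sfli : ℕ∞ :=
  sSup {d : ℕ∞ | ∃ I : ModuleCat.{u} R, Module.Injective R I ∧ d = FlatDim R I}

/-- The Gorenstein weak global dimension of `R`: the supremum of the Gorenstein flat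
dimensions of all `R`-modules. -/
noncomputable def GwglDim : ℕ∞ :=
  sSup {d : ℕ∞ | ∃ M : ModuleCat.{u} R, d = GorensteinFlatDim R M}

/-- The global dimension of `R`: the supremum of the projective dimensions of all
`R`-modules. -/
noncomputable def globalDim : ℕ∞ :=
  sSup {d : ℕ∞ | ∃ M : ModuleCat.{u} R, d = ProjDim R M}

end Resolutions
section CharacterDual

variable (R : Type u) [Ring R]

/-- The right `R`-module structure on the character module `Hom_ℤ(M, ℚ/ℤ)` of a left
`R`-module `M`, given by `(op r • f) m = f (r • m)`. -/
noncomputable instance CharacterModule.moduleOp (M : Type v) [AddCommGroup M] [Module R M] :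
    Module Rᵐᵒᵖ (CharacterModule M) where
  smul r f := AddMonoidHom.comp f (DistribMulAction.toAddMonoidHom M r.unop)
  one_smul f := by
    ext m
    show f ((1 : Rᵐᵒᵖ).unop • m) = f m
    rw [MulOpposite.unop_one, one_smul]
  mul_smul r s f := by
    ext m
    show f ((r * s).unop • m) = f (s.unop • r.unop • m)
    rw [MulOpposite.unop_mul, mul_smul]
  smul_zero r := by ext m; rfl
  smul_add r f g := by ext m; rfl
  add_smul r s f := by
    ext m
    show f ((r + s).unop • m) = f (r.unop • m) + f (s.unop • m)
    rw [MulOpposite.unop_add, add_smul, map_add]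
  zero_smul f := by
    ext m
    show f ((0 : Rᵐᵒᵖ).unop • m) = 0
    rw [MulOpposite.unop_zero, zero_smul, map_zero]

end CharacterDual

section GroupAlgebra

/-- The trivial `kG`-module `k`. -/
def TrivialModule (k : Type u) [CommRing k] (G : Type v) [Group G] : Type u := k

variable (k : Type u) [CommRing k] (G : Type v) [Group G]

noncomputable instance : AddCommGroup (TrivialModule k G) := inferInstanceAs (AddCommGroup k)
noncomputable instance : Module k (TrivialModule k G) := inferInstanceAs (Module k k)

/-- The augmentation map `kG → k`, sending every group element to `1`. -/
noncomputable def augmentation : MonoidAlgebra k G →ₐ[k] k := MonoidAlgebra.lift k k G 1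

noncomputable instance : Module (MonoidAlgebra k G) (TrivialModule k G) :=
  Module.compHom k (augmentation k G).toRingHom

noncomputable instance : IsScalarTower k (MonoidAlgebra k G) (TrivialModule k G) := by
  constructor
  intro c r x
  show (augmentation k G (c • r)) • x = c • ((augmentation k G r) • x)
  rw [map_smul]
  exact mul_smul c ((augmentation k G) r) x

/-- The Gorenstein homological dimension of a group `G` over a commutative ring `k`:
the Gorenstein flat dimension of the trivial `kG`-module `k`. -/
noncomputable def Ghd : ℕ∞ := GorensteinFlatDim (MonoidAlgebra k G) (TrivialModule k G)

/-- The Gorenstein cohomological dimension of a group `G` over a commutative ring `k`: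
the Gorenstein projective dimension of the trivial `kG`-module `k`. -/
noncomputable def Gcd : ℕ∞ := GorensteinProjDim (MonoidAlgebra k G) (TrivialModule k G)

/-- The group-inversion antipode `kG → (kG)ᵒᵖ` of the group algebra, induced by `g ↦ g⁻¹`. -/
noncomputable def MonoidAlgebra.antipode : MonoidAlgebra k G →+* (MonoidAlgebra k G)ᵐᵒᵖ :=
  ((MonoidAlgebra.lift k (MonoidAlgebra k G)ᵐᵒᵖ G)
    { toFun := fun g => MulOpposite.op (MonoidAlgebra.of k G g⁻¹)
      map_one' := by simp [MonoidAlgebra.one_def]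
      map_mul' := fun g h => by
        show MulOpposite.op (MonoidAlgebra.of k G (g * h)⁻¹) =
          MulOpposite.op (MonoidAlgebra.of k G g⁻¹) * MulOpposite.op (MonoidAlgebra.of k G h⁻¹)
        rw [mul_inv_rev, map_mul, MulOpposite.op_mul] }).toRingHom

/-- The left `kG`-module structure on the Pontryagin dual of a `kG`-module, obtained from the
right module structure via the antipode `g ↦ g⁻¹`. -/
noncomputable instance (M : Type w) [AddCommGroup M] [Module (MonoidAlgebra k G) M] :
    Module (MonoidAlgebra k G) (CharacterModule M) :=
  Module.compHom _ (MonoidAlgebra.antipode k G)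

end GroupAlgebra

section GModules

variable (k G : Type u) [CommRing k] [Group G]

/-- A `kG`-module together with a compatible `k`-module structure. -/
structure GModule : Type (u + 1) where
  carrier : Type u
  [addCommGroup : AddCommGroup carrier]
  [moduleKG : Module (MonoidAlgebra k G) carrier]
  [moduleK : Module k carrier]
  [tower : IsScalarTower k (MonoidAlgebra k G) carrier]

attribute [instance] GModule.addCommGroup GModule.moduleKG GModule.moduleK GModule.tower

instance : CoeSort (GModule k G) (Type u) := ⟨GModule.carrier⟩

/-- A weak characteristic module for `G` over `k`: a `kG`-module `A` that is flat over `k`,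
has finite flat dimension over `kG`, and admits a `k`-pure `kG`-monomorphism `k → A` from the
trivial module. -/
def HasWeakCharacteristicModule : Prop :=
  ∃ (A : GModule k G) (ι : TrivialModule k G →ₗ[MonoidAlgebra k G] A.carrier),
    ModFlat k A.carrier ∧ FlatDim (MonoidAlgebra k G) A.carrier < ⊤ ∧
    Function.Injective ι ∧
    ∀ (N : Type u) [AddCommGroup N] [Module k N],
      Function.Injective (LinearMap.rTensor N (ι.restrictScalars k))

end GModules
section TorExt

variable (R : Type u) [Ring R]

/-- `Tor_i^R(I, M) ≠ 0`, for a right `R`-module `I` and a left `R`-module `M`: for `i = 0` this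
says `I ⊗_R M ≠ 0`; for `i = j + 1` it says that for every projective resolution `P` of `M`,
the complex `I ⊗_R P` fails to be exact at degree `i`. -/
def TorNonzero (I : Type v) [AddCommGroup I] [Module Rᵐᵒᵖ I]
    (M : Type v) [AddCommGroup M] [Module R M] : ℕ → Prop
  | 0 => ∃ x : RTensor R I M, x ≠ 0
  | (j + 1) =>
    ∀ (P : ℕ → ModuleCat.{v} R) (d : ∀ i, P (i + 1) →ₗ[R] P i) (ε : P 0 →ₗ[R] M),
      (∀ i, Module.Projective R (P i)) → Function.Surjective ε → Function.Exact (d 0) ε →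
      (∀ i, Function.Exact (d (i + 1)) (d i)) →
      ¬ Function.Exact (RTensor.map R I (d (j + 1))) (RTensor.map R I (d j))

/-- `Ext^i_R(M, N) ≠ 0`: for `i = 0` this says `Hom_R(M, N) ≠ 0`; for `i = j + 1` it says that
for every projective resolution `P` of `M`, the complex `Hom_R(P, N)` fails to be exact at
degree `i`. -/
def ExtNonzero (M N : Type v) [AddCommGroup M] [Module R M]
    [AddCommGroup N] [Module R N] : ℕ → Prop
  | 0 => ∃ f : M →ₗ[R] N, f ≠ 0
  | (j + 1) =>
    ∀ (P : ℕ → ModuleCat.{v} R) (d : ∀ i, P (i + 1) →ₗ[R] P i) (ε : P 0 →ₗ[R] M),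
      (∀ i, Module.Projective R (P i)) → Function.Surjective ε → Function.Exact (d 0) ε →
      (∀ i, Function.Exact (d (i + 1)) (d i)) →
      ¬ Function.Exact (fun g : ↥(P j) →ₗ[R] N => g.comp (d j))
          (fun g : ↥(P (j + 1)) →ₗ[R] N => g.comp (d (j + 1)))

end TorExt

section GeneralizedDims

variable (k G : Type u) [CommRing k] [Group G]

/-- The generalized homological dimension of a group `G` over `k`:
`sup {i : Tor_i^{kG}(I, M) ≠ 0, M k-flat, I an injective right kG-module}`. -/
noncomputable def genHd : ℕ∞ :=
  sSup {d : ℕ∞ | ∃ i : ℕ, d = (i : ℕ∞) ∧ ∃ M : GModule k G, ModFlat k M.carrier ∧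
    ∃ I : ModuleCat.{u} (MonoidAlgebra k G)ᵐᵒᵖ, Module.Injective (MonoidAlgebra k G)ᵐᵒᵖ I ∧
      TorNonzero (MonoidAlgebra k G) I M.carrier i}

/-- The variant `hd'` of the generalized homological dimension of a group `G` over `k`:
`sup {i : Tor_i^{kG}(I, M) ≠ 0, M k-projective, I an injective right kG-module}`. -/
noncomputable def genHd' : ℕ∞ :=
  sSup {d : ℕ∞ | ∃ i : ℕ, d = (i : ℕ∞) ∧ ∃ M : GModule k G, Module.Projective k M.carrier ∧
    ∃ I : ModuleCat.{u} (MonoidAlgebra k G)ᵐᵒᵖ, Module.Injective (MonoidAlgebra k G)ᵐᵒᵖ I ∧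
      TorNonzero (MonoidAlgebra k G) I M.carrier i}

/-- The generalized cohomological dimension of a group `G` over `k`:
`sup {i : Ext^i_{kG}(M, P) ≠ 0, M k-projective, P a projective kG-module}`. -/
noncomputable def genCd : ℕ∞ :=
  sSup {d : ℕ∞ | ∃ i : ℕ, d = (i : ℕ∞) ∧ ∃ M : GModule k G, Module.Projective k M.carrier ∧
    ∃ P : ModuleCat.{u} (MonoidAlgebra k G), Module.Projective (MonoidAlgebra k G) P ∧
      ExtNonzero (MonoidAlgebra k G) M.carrier P i}

end GeneralizedDims

section Induction

open MonoidAlgebra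

variable (k : Type u) [CommRing k] {G : Type u} [Group G] (H : Subgroup G)
variable (M : Type u) [AddCommGroup M] [Module (MonoidAlgebra k ↥H) M]

/-- The relations defining `kG ⊗_{kH} M` as a quotient of `kG ⊗_ℤ M`. -/
noncomputable def indRel : Submodule (MonoidAlgebra k G) (MonoidAlgebra k G ⊗[ℤ] M) :=
  Submodule.span (MonoidAlgebra k G)
    {x | ∃ (a : MonoidAlgebra k G) (s : MonoidAlgebra k ↥H) (m : M),
      x = (a * MonoidAlgebra.mapDomainRingHom k H.subtype s) ⊗ₜ[ℤ] m - a ⊗ₜ[ℤ] (s • m)}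

/-- The induced module `Ind_H^G M = kG ⊗_{kH} M`, a `kG`-module. -/
noncomputable def IndMod : Type u :=
  (MonoidAlgebra k G ⊗[ℤ] M) ⧸ indRel k H M

noncomputable instance : AddCommGroup (IndMod k H M) :=
  inferInstanceAs (AddCommGroup ((MonoidAlgebra k G ⊗[ℤ] M) ⧸ indRel k H M))

noncomputable instance : Module (MonoidAlgebra k G) (IndMod k H M) :=
  inferInstanceAs (Module (MonoidAlgebra k G) ((MonoidAlgebra k G ⊗[ℤ] M) ⧸ indRel k H M))

end Induction



section Stmt7Dev

open MulOpposite

namespace Stmt7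

lemma inj_congr {A B A' B' : Type*} [AddCommGroup A] [AddCommGroup B]
    [AddCommGroup A'] [AddCommGroup B'] (eA : A ≃+ A') (eB : B ≃+ B')
    (f : A → B) (f' : A' → B') (hsq : ∀ a, eB (f a) = f' (eA a))
    (h : Function.Injective f') : Function.Injective f := by
  intro x y hxy
  apply eA.injective
  apply h
  rw [← hsq, ← hsq, hxy]

lemma square_symm {A B A' B' : Type*} [AddCommGroup A] [AddCommGroup B]
    [AddCommGroup A'] [AddCommGroup B'] (eA : A ≃+ A') (eB : B ≃+ B')
    (f : A → B) (f' : A' → B') (hsq : ∀ a, eB (f a) = f' (eA a)) :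
    ∀ a', eB.symm (f' a') = f (eA.symm a') := by
  intro a'
  apply eB.injective
  rw [AddEquiv.apply_symm_apply, hsq, AddEquiv.apply_symm_apply]

lemma exact_congr {A B C A' B' C' : Type*} [AddCommGroup A] [AddCommGroup B] [AddCommGroup C]
    [AddCommGroup A'] [AddCommGroup B'] [AddCommGroup C']
    (eA : A ≃+ A') (eB : B ≃+ B') (eC : C ≃+ C')
    {f : A → B} {g : B → C} {f' : A' → B'} {g' : B' → C'}
    (hf : ∀ a, eB (f a) = f' (eA a)) (hg : ∀ b, eC (g b) = g' (eB b))
    (h : Function.Exact f g) : Function.Exact f' g' := by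
  intro b'
  constructor
  · intro hb'
    have h0 : g (eB.symm b') = 0 := by
      apply eC.injective
      rw [hg, eB.apply_symm_apply, hb', map_zero]
    obtain ⟨a, ha⟩ := (h _).1 h0
    exact ⟨eA a, by rw [← hf, ha, eB.apply_symm_apply]⟩
  · rintro ⟨a', rfl⟩
    obtain ⟨a, rfl⟩ := eA.surjective a'
    rw [← hf, ← hg, h.apply_apply_eq_zero a, map_zero]

section Bridge1

variable (k : Type u) [CommRing k]

variable (I : Type u) [AddCommGroup I] [Module kᵐᵒᵖ I] [Module k I]
variable (N : Type u) [AddCommGroup N] [Module k N]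

/-- from `RTensor` to the mathlib tensor product over a commutative ring. -/
noncomputable def rtToTensor (hc : ∀ (r : k) (a : I), op r • a = r • a) :
    RTensor k I N →+ I ⊗[k] N :=
  QuotientAddGroup.lift _
    (TensorProduct.liftAddHom (R := ℤ)
      (AddMonoidHom.mk' (fun a => AddMonoidHom.mk' (fun n => a ⊗ₜ[k] n)
          (fun n n' => TensorProduct.tmul_add a n n'))
        (fun a a' => by ext n; exact TensorProduct.add_tmul a a' n))
      (fun z a n => TensorProduct.smul_tmul z a n))
    (by
      intro x hx
      refine (AddSubgroup.closure_le _).2 ?_ hx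
      rintro y ⟨r, a, n, rfl⟩
      simp only [SetLike.mem_coe, AddMonoidHom.mem_ker, map_sub]
      erw [TensorProduct.liftAddHom_tmul, TensorProduct.liftAddHom_tmul]
      simp only [AddMonoidHom.mk'_apply]
      rw [hc, TensorProduct.smul_tmul, sub_self])

/-- from the mathlib tensor product to `RTensor`. -/
noncomputable def tensorToRt (hc : ∀ (r : k) (a : I), op r • a = r • a) :
    I ⊗[k] N →+ RTensor k I N :=
  TensorProduct.liftAddHom (R := k)
    (AddMonoidHom.mk' (fun a => AddMonoidHom.mk'
        (fun n => (QuotientAddGroup.mk (a ⊗ₜ[ℤ] n) : RTensor k I N))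
        (fun n n' => by
          show (QuotientAddGroup.mk (a ⊗ₜ[ℤ] (n + n')) : RTensor k I N) = _
          rw [TensorProduct.tmul_add]
          rfl))
      (fun a a' => by
        ext n
        show (QuotientAddGroup.mk ((a + a') ⊗ₜ[ℤ] n) : RTensor k I N) = _
        rw [TensorProduct.add_tmul]
        rfl))
    (fun r a n => by
      show (QuotientAddGroup.mk ((r • a) ⊗ₜ[ℤ] n) : RTensor k I N) =
        QuotientAddGroup.mk (a ⊗ₜ[ℤ] (r • n))
      rw [QuotientAddGroup.eq]
      have hmem : (op r • a) ⊗ₜ[ℤ] n - a ⊗ₜ[ℤ] (r • n) ∈ rTensorRel k I N :=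
        AddSubgroup.subset_closure ⟨r, a, n, rfl⟩
      rw [hc] at hmem
      have := neg_mem hmem
      convert this using 1
      abel)

/-- The canonical equivalence `RTensor k I N ≃+ I ⊗[k] N` over a commutative ring. -/
noncomputable def rtEquiv (hc : ∀ (r : k) (a : I), op r • a = r • a) :
    RTensor k I N ≃+ I ⊗[k] N where
  toFun := rtToTensor k I N hc
  invFun := tensorToRt k I N hc
  left_inv := by
    intro x
    induction x using QuotientAddGroup.induction_on with
    | H z =>
      induction z using TensorProduct.induction_on with
      | zero =>
        show tensorToRt k I N hc (rtToTensor k I N hc (0 : RTensor k I N)) = (0 : RTensor k I N)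
        simp
      | tmul a n => rfl
      | add x y hx hy =>
        have : (QuotientAddGroup.mk (x + y) : RTensor k I N)
            = @HAdd.hAdd (RTensor k I N) (RTensor k I N) (RTensor k I N) _
              (QuotientAddGroup.mk x) (QuotientAddGroup.mk y) := rfl
        erw [this, map_add, map_add, hx, hy]
  right_inv := by
    intro x
    induction x using TensorProduct.induction_on with
    | zero => simp
    | tmul a n => rfl
    | add x y hx hy => rw [map_add, map_add, hx, hy]
  map_add' := map_add _

lemma rtEquiv_mk (hc : ∀ (r : k) (a : I), op r • a = r • a) (a : I) (n : N) :
    rtEquiv k I N hc (QuotientAddGroup.mk (a ⊗ₜ[ℤ] n)) = a ⊗ₜ[k] n := rfl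

/-- naturality of `rtEquiv` in the second variable -/
lemma rtEquiv_map (hc : ∀ (r : k) (a : I), op r • a = r • a)
    {N' : Type u} [AddCommGroup N'] [Module k N'] (f : N →ₗ[k] N') (x : RTensor k I N) :
    rtEquiv k I N' hc (RTensor.map k I f x) =
      LinearMap.lTensor I f (rtEquiv k I N hc x) := by
  induction x using QuotientAddGroup.induction_on with
  | H z =>
    induction z using TensorProduct.induction_on with
    | zero =>
      show rtEquiv k I N' hc (RTensor.map k I f (0 : RTensor k I N)) =
        LinearMap.lTensor I f (rtEquiv k I N hc (0 : RTensor k I N))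
      simp
    | tmul a n =>
      show rtEquiv k I N' hc (QuotientAddGroup.mk (a ⊗ₜ[ℤ] f n)) = _
      rw [rtEquiv_mk, rtEquiv_mk]
      simp
    | add x y hx hy =>
      have h1 : (QuotientAddGroup.mk (x + y) : RTensor k I N)
          = @HAdd.hAdd (RTensor k I N) (RTensor k I N) (RTensor k I N) _
              (QuotientAddGroup.mk x) (QuotientAddGroup.mk y) := rfl
      erw [h1, map_add, map_add, map_add, hx, hy]
      exact (map_add _ _ _).symm

/-- the underlying `k`-linear map of a `kᵐᵒᵖ`-linear map -/
def fK {I' : Type u} [AddCommGroup I'] [Module kᵐᵒᵖ I'] [Module k I']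
    (f : I →ₗ[kᵐᵒᵖ] I') (hc : ∀ (r : k) (a : I), op r • a = r • a)
    (hc' : ∀ (r : k) (a : I'), op r • a = r • a) : I →ₗ[k] I' where
  toFun := f
  map_add' := f.map_add
  map_smul' := fun r a => by
    simp only [RingHom.id_apply]
    rw [← hc, f.map_smul, hc']

/-- naturality of `rtEquiv` in the first variable -/
lemma rtEquiv_mapLeft {I' : Type u} [AddCommGroup I'] [Module kᵐᵒᵖ I'] [Module k I']
    (f : I →ₗ[kᵐᵒᵖ] I') (hc : ∀ (r : k) (a : I), op r • a = r • a)
    (hc' : ∀ (r : k) (a : I'), op r • a = r • a) (x : RTensor k I N) :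
    rtEquiv k I' N hc' (RTensor.mapLeft k f N x) =
      LinearMap.rTensor N (fK k I f hc hc') (rtEquiv k I N hc x) := by
  induction x using QuotientAddGroup.induction_on with
  | H z =>
    induction z using TensorProduct.induction_on with
    | zero =>
      show rtEquiv k I' N hc' (RTensor.mapLeft k f N (0 : RTensor k I N)) =
        LinearMap.rTensor N (fK k I f hc hc') (rtEquiv k I N hc (0 : RTensor k I N))
      simp
    | tmul a n =>
      show rtEquiv k I' N hc' (QuotientAddGroup.mk ((f a) ⊗ₜ[ℤ] n)) = _
      rw [rtEquiv_mk, rtEquiv_mk]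
      rfl
    | add x y hx hy =>
      have h1 : (QuotientAddGroup.mk (x + y) : RTensor k I N)
          = @HAdd.hAdd (RTensor k I N) (RTensor k I N) (RTensor k I N) _
              (QuotientAddGroup.mk x) (QuotientAddGroup.mk y) := rfl
      erw [h1, map_add, map_add, map_add, hx, hy]
      exact (map_add _ _ _).symm

end Bridge1


section FlatBridge

variable (k : Type u) [CommRing k]

/-- the `k`-module structure on a right `k`-module, `k` commutative -/
noncomputable def opmod (X : Type u) [AddCommGroup X] [Module kᵐᵒᵖ X] : Module k X :=
  Module.compHom X (RingEquiv.toOpposite k).toRingHom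

lemma opmod_hc (X : Type u) [AddCommGroup X] [Module kᵐᵒᵖ X] :
    letI := opmod k X
    ∀ (r : k) (a : X), op r • a = r • a := fun _ _ => rfl

/-- the right `k`-module structure on a `k`-module, `k` commutative -/
noncomputable def kop (X : Type u) [AddCommGroup X] [Module k X] : Module kᵐᵒᵖ X :=
  Module.compHom X ((RingEquiv.toOpposite k).symm.toRingHom)

lemma kop_hc (X : Type u) [AddCommGroup X] [Module k X] :
    letI := kop k X
    ∀ (r : k) (a : X), op r • a = r • a := fun _ _ => rfl

lemma modFlat_of_flat (N : Type u) [AddCommGroup N] [Module k N] (h : Module.Flat k N) :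
    ModFlat k N := by
  intro I I' f hf
  letI := opmod k ↥I
  letI := opmod k ↥I'
  have hc : ∀ (r : k) (a : ↥I), op r • a = r • a := opmod_hc k ↥I
  have hc' : ∀ (r : k) (a : ↥I'), op r • a = r • a := opmod_hc k ↥I'
  have hinj : Function.Injective (LinearMap.rTensor N (fK k ↥I f hc hc')) :=
    Module.Flat.rTensor_preserves_injective_linearMap _ hf
  exact inj_congr (rtEquiv k ↥I N hc) (rtEquiv k ↥I' N hc') _ _
    (fun x => rtEquiv_mapLeft k ↥I N f hc hc' x) hinj

lemma flat_of_modFlat (N : Type u) [AddCommGroup N] [Module k N] (h : ModFlat k N) :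
    Module.Flat k N := by
  rw [Module.Flat.iff_rTensor_preserves_injective_linearMap]
  intro N₁ N₂ _ _ _ _ f hf
  letI := kop k N₁
  letI := kop k N₂
  have hc1 : ∀ (r : k) (a : N₁), op r • a = r • a := kop_hc k N₁
  have hc2 : ∀ (r : k) (a : N₂), op r • a = r • a := kop_hc k N₂
  let fop : N₁ →ₗ[kᵐᵒᵖ] N₂ :=
    { toFun := f, map_add' := f.map_add,
      map_smul' := fun r a => f.map_smul (unop r) a }
  have hinj : Function.Injective (RTensor.mapLeft k fop N) :=
    h (ModuleCat.of kᵐᵒᵖ N₁) (ModuleCat.of kᵐᵒᵖ N₂) fop hf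
  have hfk : fK k N₁ fop hc1 hc2 = f := LinearMap.ext fun x => rfl
  have hsq := square_symm (rtEquiv k N₁ N hc1) (rtEquiv k N₂ N hc2)
      (⇑(RTensor.mapLeft k fop N)) (⇑(LinearMap.rTensor N (fK k N₁ fop hc1 hc2)))
      (fun y => rtEquiv_mapLeft k N₁ N fop hc1 hc2 y)
  rw [hfk] at hsq
  exact inj_congr (rtEquiv k N₁ N hc1).symm (rtEquiv k N₂ N hc2).symm _ _
    (fun a => (hsq a)) hinj

lemma rtMap_exact (I : Type u) [AddCommGroup I] [Module kᵐᵒᵖ I] [Module k I]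
    (hc : ∀ (r : k) (a : I), op r • a = r • a)
    {N N' N'' : Type u} [AddCommGroup N] [Module k N] [AddCommGroup N'] [Module k N']
    [AddCommGroup N''] [Module k N'']
    (f : N →ₗ[k] N') (g : N' →ₗ[k] N'')
    (h : Function.Exact (LinearMap.lTensor I f) (LinearMap.lTensor I g)) :
    Function.Exact (RTensor.map k I f) (RTensor.map k I g) :=
  exact_congr (rtEquiv k I N hc).symm (rtEquiv k I N' hc).symm (rtEquiv k I N'' hc).symm
    (square_symm _ _ _ _ (fun x => rtEquiv_map k I N hc f x))
    (square_symm _ _ _ _ (fun x => rtEquiv_map k I N' hc g x)) h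

end FlatBridge


section Chase

variable {k : Type u} [CommRing k]

lemma chase
    {A B C : ℤ → Type u}
    [∀ n, AddCommGroup (A n)] [∀ n, Module k (A n)]
    [∀ n, AddCommGroup (B n)] [∀ n, Module k (B n)]
    [∀ n, AddCommGroup (C n)] [∀ n, Module k (C n)]
    (dA : ∀ n : ℤ, A (n+1) →ₗ[k] A n) (dB : ∀ n : ℤ, B (n+1) →ₗ[k] B n)
    (dC : ∀ n : ℤ, C (n+1) →ₗ[k] C n)
    (ι : ∀ n, A n →ₗ[k] B n) (π : ∀ n, B n →ₗ[k] C n)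
    (hι : ∀ n, Function.Injective (ι n)) (hπ : ∀ n, Function.Surjective (π n))
    (hexact : ∀ n, Function.Exact (ι n) (π n))
    (sqι : ∀ (n : ℤ) (a : A (n+1)), ι n (dA n a) = dB n (ι (n+1) a))
    (sqπ : ∀ (n : ℤ) (b : B (n+1)), π n (dB n b) = dC n (π (n+1) b))
    (hA : ∀ n, Function.Exact (dA (n+1)) (dA n))
    (hB : ∀ n, Function.Exact (dB (n+1)) (dB n))
    (n : ℤ) : Function.Exact (dC (n+1)) (dC n) := by
  have key : ∀ m : ℤ, Function.Exact (dC (m+1+1)) (dC (m+1)) := by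
    intro m c
    constructor
    · intro hc
      obtain ⟨b, rfl⟩ := hπ (m+1+1) c
      have h1 : π (m+1) (dB (m+1) b) = 0 := by rw [sqπ, hc]
      obtain ⟨a, ha⟩ := (hexact (m+1) _).1 h1
      have h2 : ι m (dA m a) = 0 := by
        rw [sqι, ha]
        exact (hB m).apply_apply_eq_zero b
      have h3 : dA m a = 0 := by
        apply hι m
        rw [h2, map_zero]
      obtain ⟨a', ha'⟩ := (hA m a).1 h3
      have h4 : dB (m+1) (b - ι (m+1+1) a') = 0 := by
        rw [map_sub, ← sqι, ha', ha, sub_self]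
      obtain ⟨b', hb'⟩ := (hB (m+1) _).1 h4
      refine ⟨π (m+1+1+1) b', ?_⟩
      rw [← sqπ, hb', map_sub, (hexact (m+1+1)).apply_apply_eq_zero a', sub_zero]
    · rintro ⟨c', rfl⟩
      obtain ⟨b', rfl⟩ := hπ _ c'
      rw [← sqπ, ← sqπ, (hB (m+1)).apply_apply_eq_zero b', map_zero]
  have h := key (n - 1)
  have e : n - 1 + 1 = n := by omega
  rw [e] at h
  exact h

end Chase

section MainLemma

/-- a flat resolution of length at most `n`, with mathlib's flatness -/
def FRes (k : Type u) [CommRing k] (I : Type u) [AddCommGroup I] [Module k I] (n : ℕ) : Prop :=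
  ∃ (P : ℕ → ModuleCat.{u} k) (dd : ∀ i, P (i+1) →ₗ[k] P i) (ε : P 0 →ₗ[k] I),
    (∀ i, Module.Flat k (P i)) ∧ Function.Surjective ε ∧ Function.Exact (dd 0) ε ∧
    (∀ i, Function.Exact (dd (i+1)) (dd i)) ∧ ∀ i, n < i → ∀ x : P i, x = 0

lemma main_tensor_acyclic {k : Type u} [CommRing k] (n : ℕ) :
    ∀ (I : Type u) [AddCommGroup I] [Module k I], FRes k I n →
    ∀ (F : ℤ → Type u) [∀ m, AddCommGroup (F m)] [∀ m, Module k (F m)]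
    (d : ∀ m : ℤ, F (m+1) →ₗ[k] F m),
    (∀ m, Module.Flat k (F m)) → (∀ m, Function.Exact (d (m+1)) (d m)) →
    ∀ m, Function.Exact (LinearMap.lTensor I (d (m+1))) (LinearMap.lTensor I (d m)) := by
  induction n with
  | zero =>
    rintro I _ _ ⟨P, dd, ε, hflat, hsur, hex0, hexd, htriv⟩ F _ _ d hF hFex m
    have hinj : Function.Injective ε := by
      intro x y hxy
      have hz0 : ε (x - y) = 0 := by rw [map_sub, hxy, sub_self]
      obtain ⟨z, hz⟩ := (hex0 _).1 hz0
      rw [htriv 1 (by norm_num) z, map_zero] at hz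
      rw [← sub_eq_zero, ← hz]
    have e := LinearEquiv.ofBijective ε ⟨hinj, hsur⟩
    haveI : Module.Flat k I := Module.Flat.of_linearEquiv e.symm
    exact Module.Flat.lTensor_exact I (hFex m)
  | succ n ih =>
    rintro I _ _ ⟨P, dd, ε, hflat, hsur, hex0, hexd, htriv⟩ F _ _ d hF hFex m
    set K := LinearMap.ker ε with hK
    have hKres : FRes k ↥K n := by
      refine ⟨fun i => P (i+1), fun i => dd (i+1),
        (dd 0).codRestrict K (fun x => LinearMap.mem_ker.2 (hex0.apply_apply_eq_zero x)),
        fun i => hflat (i+1), ?_, ?_, fun i => hexd (i+1),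
        fun i hi x => htriv (i+1) (by omega) x⟩
      · rintro ⟨y, hy⟩
        obtain ⟨x, hx⟩ := (hex0 y).1 hy
        exact ⟨x, Subtype.ext hx⟩
      · intro y
        constructor
        · intro hy
          have : dd 0 y = 0 := by
            have := congrArg Subtype.val hy
            exact this
          exact (hexd 0 y).1 this
        · rintro ⟨x, rfl⟩
          apply Subtype.ext
          exact (hexd 0 _).2 ⟨x, rfl⟩
    have hKex := ih ↥K hKres F d hF hFex
    haveI hP0 : Module.Flat k (P 0) := hflat 0
    have hsub_exact : Function.Exact (K.subtype) ε := LinearMap.exact_subtype_ker_map ε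
    have res := chase (A := fun m => ↥K ⊗[k] F m) (B := fun m => ↥(P 0) ⊗[k] F m)
      (C := fun m => I ⊗[k] F m)
      (fun m => LinearMap.lTensor ↥K (d m)) (fun m => LinearMap.lTensor (P 0) (d m))
      (fun m => LinearMap.lTensor I (d m))
      (fun m => LinearMap.rTensor (F m) K.subtype) (fun m => LinearMap.rTensor (F m) ε)
      (fun m => by
        haveI := hF m
        exact Module.Flat.rTensor_preserves_injective_linearMap (M := F m) K.subtype
          Subtype.val_injective)
      (fun m => LinearMap.rTensor_surjective (F m) hsur)
      (fun m => rTensor_exact (F m) hsub_exact hsur)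
      (fun m a => by
        rw [← LinearMap.comp_apply, ← LinearMap.comp_apply,
          LinearMap.rTensor_comp_lTensor, LinearMap.lTensor_comp_rTensor])
      (fun m b => by
        rw [← LinearMap.comp_apply, ← LinearMap.comp_apply,
          LinearMap.rTensor_comp_lTensor, LinearMap.lTensor_comp_rTensor])
      hKex
      (fun m => Module.Flat.lTensor_exact (P 0) (hFex m))
      m
    exact res

end MainLemma


section Extraction

variable (k : Type u) [CommRing k]

lemma injective_transfer (Q : Type u) [AddCommGroup Q]
    [Module kᵐᵒᵖ Q] [Module k Q] (hc : ∀ (r : k) (a : Q), op r • a = r • a)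
    (h : Module.Injective kᵐᵒᵖ Q) : Module.Injective k Q := by
  constructor
  intro X Y _ _ _ _ f hf g
  letI := kop k X
  letI := kop k Y
  let f' : X →ₗ[kᵐᵒᵖ] Y :=
    { toFun := f, map_add' := f.map_add, map_smul' := fun r a => f.map_smul (unop r) a }
  let g' : X →ₗ[kᵐᵒᵖ] Q :=
    { toFun := g, map_add' := g.map_add, map_smul' := fun r a => by
        show g (unop r • a) = r • g a
        rw [g.map_smul, ← hc, op_unop] }
  obtain ⟨h', hh'⟩ := h.out f' hf g'
  let H : Y →ₗ[k] Q :=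
    { toFun := h'
      map_add' := h'.map_add
      map_smul' := fun r a => (h'.map_smul (op r) a).trans (hc r (h' a)) }
  exact ⟨H, hh'⟩

lemma exists_fres_of_sfli (hk : sfli k < ⊤)
    (I : Type u) [AddCommGroup I] [Module kᵐᵒᵖ I] [Module k I]
    (hc : ∀ (r : k) (a : I), op r • a = r • a)
    (hinj : Module.Injective kᵐᵒᵖ I) : ∃ n, FRes k I n := by
  haveI hIk : Module.Injective k I := injective_transfer k I hc hinj
  have hmem : FlatDim k I ∈
      {d : ℕ∞ | ∃ J : ModuleCat.{u} k, Module.Injective k J ∧ d = FlatDim k J} :=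
    ⟨ModuleCat.of k I, hIk, rfl⟩
  have hlt : FlatDim k I < ⊤ := lt_of_le_of_lt (le_sSup hmem) hk
  have hne : {d : ℕ∞ | ∃ m : ℕ, d = (m : ℕ∞) ∧ FlatDimLE k I m}.Nonempty := by
    by_contra hempty
    rw [Set.not_nonempty_iff_eq_empty] at hempty
    have h0 : FlatDim k I = ⊤ := by rw [FlatDim, hempty, sInf_empty]
    rw [h0] at hlt
    exact lt_irrefl _ hlt
  obtain ⟨d, m, rfl, hdle⟩ := hne
  obtain ⟨P, dd, ε, hflat, h1, h2, h3, h4⟩ := hdle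
  exact ⟨m, P, dd, ε, fun i => flat_of_modFlat k (P i) (hflat i), h1, h2, h3, h4⟩

end Extraction


section Bridge2

variable (k : Type u) [CommRing k] (A : Type u) [Ring A] [Algebra k A]

/-- generic relation lemma in `RTensor` -/
lemma rt_mk_rel {R : Type u} [Ring R] {W X : Type u} [AddCommGroup W] [Module Rᵐᵒᵖ W]
    [AddCommGroup X] [Module R X] (r : R) (w : W) (x : X) :
    (QuotientAddGroup.mk ((op r • w) ⊗ₜ[ℤ] x) : RTensor R W X) =
      QuotientAddGroup.mk (w ⊗ₜ[ℤ] (r • x)) := by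
  rw [QuotientAddGroup.eq]
  have hx : (op r • w) ⊗ₜ[ℤ] x - w ⊗ₜ[ℤ] (r • x) ∈ rTensorRel R W X :=
    AddSubgroup.subset_closure ⟨r, w, x, rfl⟩
  have hmem := neg_mem hx
  convert hmem using 1
  abel

instance opSmulComm : SMulCommClass k Aᵐᵒᵖ A :=
  ⟨fun c r a => by
    rw [MulOpposite.smul_eq_mul_unop, MulOpposite.smul_eq_mul_unop, smul_mul_assoc]⟩

variable (I : Type u) [AddCommGroup I] [Module k I]
variable (X : Type u) [AddCommGroup X] [Module A X] [Module k X] [IsScalarTower k A X]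

/-- the action map `A →ₗ[k] X` for a fixed `x` -/
def actMap (x : X) : A →ₗ[k] X where
  toFun := fun a => a • x
  map_add' := fun a b => add_smul a b x
  map_smul' := fun c a => smul_assoc c a x

/-- `(a ⊗ i) ↦ i ⊗ (a • x)` -/
noncomputable def phi (x : X) : (A ⊗[k] I) →ₗ[k] (I ⊗[k] X) :=
  TensorProduct.lift ((TensorProduct.mk k I X).flip.comp (actMap k A X x) |>.flip).flip

lemma phi_tmul (x : X) (a : A) (i : I) : phi k A I X x (a ⊗ₜ[k] i) = i ⊗ₜ[k] (a • x) := rfl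

lemma phi_add (z : A ⊗[k] I) (x x' : X) :
    phi k A I X (x + x') z = phi k A I X x z + phi k A I X x' z := by
  induction z using TensorProduct.induction_on with
  | zero => simp
  | tmul a i => rw [phi_tmul, phi_tmul, phi_tmul, smul_add, TensorProduct.tmul_add]
  | add z z' hz hz' => rw [map_add, map_add, map_add, hz, hz']; abel

lemma phi_op_smul (z : A ⊗[k] I) (x : X) (r : Aᵐᵒᵖ) :
    phi k A I X x (r • z) = phi k A I X (unop r • x) z := by
  induction z using TensorProduct.induction_on with
  | zero => simp
  | tmul a i =>
    rw [TensorProduct.smul_tmul', phi_tmul, phi_tmul, MulOpposite.smul_eq_mul_unop, mul_smul]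
  | add z z' hz hz' => rw [smul_add, map_add, map_add, hz, hz']

/-- forward map of the induction isomorphism -/
noncomputable def indFwd : RTensor A (A ⊗[k] I) X →+ I ⊗[k] X :=
  QuotientAddGroup.lift _
    (TensorProduct.liftAddHom (R := ℤ)
      (AddMonoidHom.mk' (fun z => AddMonoidHom.mk' (fun x => phi k A I X x z) (phi_add k A I X z))
        (fun z z' => by ext x; exact map_add (phi k A I X x) z z'))
      (fun n z x => by
        show phi k A I X x (n • z) = phi k A I X (n • x) z
        rw [map_zsmul]
        exact (map_zsmul (AddMonoidHom.mk' (fun x => phi k A I X x z) (phi_add k A I X z))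
          n x).symm))
    (by
      intro y hy
      refine (AddSubgroup.closure_le _).2 ?_ hy
      rintro w ⟨r, z, x, rfl⟩
      simp only [SetLike.mem_coe, AddMonoidHom.mem_ker, map_sub]
      rw [TensorProduct.liftAddHom_tmul, TensorProduct.liftAddHom_tmul]
      simp only [AddMonoidHom.mk'_apply]
      rw [phi_op_smul]
      simp only [MulOpposite.unop_op]
      rw [sub_self])

lemma indFwd_mk (z : A ⊗[k] I) (x : X) :
    indFwd k A I X (QuotientAddGroup.mk (z ⊗ₜ[ℤ] x)) = phi k A I X x z := rfl

/-- backward map of the induction isomorphism -/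
noncomputable def indBwd : I ⊗[k] X →+ RTensor A (A ⊗[k] I) X :=
  TensorProduct.liftAddHom (R := k)
    (AddMonoidHom.mk' (fun i => AddMonoidHom.mk'
        (fun x => (QuotientAddGroup.mk (((1 : A) ⊗ₜ[k] i) ⊗ₜ[ℤ] x) : RTensor A (A ⊗[k] I) X))
        (fun x x' => by
          show (QuotientAddGroup.mk (((1:A) ⊗ₜ[k] i) ⊗ₜ[ℤ] (x + x')) : RTensor A (A ⊗[k] I) X) = _
          rw [TensorProduct.tmul_add]
          rfl))
      (fun i i' => by
        ext x
        show (QuotientAddGroup.mk (((1:A) ⊗ₜ[k] (i + i')) ⊗ₜ[ℤ] x) : RTensor A (A ⊗[k] I) X) = _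
        rw [TensorProduct.tmul_add, TensorProduct.add_tmul]
        rfl))
    (fun c i x => by
      show (QuotientAddGroup.mk (((1:A) ⊗ₜ[k] (c • i)) ⊗ₜ[ℤ] x) : RTensor A (A ⊗[k] I) X) =
        QuotientAddGroup.mk (((1:A) ⊗ₜ[k] i) ⊗ₜ[ℤ] (c • x))
      have h1 : (1:A) ⊗ₜ[k] (c • i) = op (algebraMap k A c) • ((1:A) ⊗ₜ[k] i) := by
        rw [TensorProduct.smul_tmul', MulOpposite.smul_eq_mul_unop]
        simp only [MulOpposite.unop_op, one_mul]
        rw [Algebra.algebraMap_eq_smul_one, TensorProduct.smul_tmul]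
      rw [h1, rt_mk_rel, algebraMap_smul])

lemma indBwd_tmul (i : I) (x : X) :
    indBwd k A I X (i ⊗ₜ[k] x) =
      (QuotientAddGroup.mk (((1 : A) ⊗ₜ[k] i) ⊗ₜ[ℤ] x) : RTensor A (A ⊗[k] I) X) := rfl

/-- The induction isomorphism `(A ⊗_k I) ⊗_A X ≃ I ⊗_k X`. -/
noncomputable def indEquiv : RTensor A (A ⊗[k] I) X ≃+ I ⊗[k] X where
  toFun := indFwd k A I X
  invFun := indBwd k A I X
  left_inv := by
    intro q
    induction q using QuotientAddGroup.induction_on with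
    | H w =>
      induction w using TensorProduct.induction_on with
      | zero =>
        show indBwd k A I X (indFwd k A I X (0 : RTensor A (A ⊗[k] I) X)) =
          (0 : RTensor A (A ⊗[k] I) X)
        simp
      | tmul z x =>
        rw [indFwd_mk]
        induction z using TensorProduct.induction_on with
        | zero =>
          rw [map_zero]
          rw [show ((0 : A ⊗[k] I) ⊗ₜ[ℤ] x) = (0 : (A ⊗[k] I) ⊗[ℤ] X) from
            TensorProduct.zero_tmul _ x]
          simp
          rfl
        | tmul a i =>
          rw [phi_tmul, indBwd_tmul, ← rt_mk_rel]
          congr 2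
          rw [TensorProduct.smul_tmul', MulOpposite.smul_eq_mul_unop]
          simp
        | add z z' hz hz' =>
          rw [map_add]
          rw [show ((z + z') ⊗ₜ[ℤ] x) = z ⊗ₜ[ℤ] x + z' ⊗ₜ[ℤ] x from TensorProduct.add_tmul z z' x]
          have hq : (QuotientAddGroup.mk (z ⊗ₜ[ℤ] x + z' ⊗ₜ[ℤ] x) : RTensor A (A ⊗[k] I) X)
              = @HAdd.hAdd (RTensor A (A ⊗[k] I) X) (RTensor A (A ⊗[k] I) X) (RTensor A (A ⊗[k] I) X) _
                (QuotientAddGroup.mk (z ⊗ₜ[ℤ] x)) (QuotientAddGroup.mk (z' ⊗ₜ[ℤ] x)) := rfl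
          rw [hq, map_add, hz, hz']
      | add w w' hw hw' =>
        have hq : (QuotientAddGroup.mk (w + w') : RTensor A (A ⊗[k] I) X)
            = @HAdd.hAdd (RTensor A (A ⊗[k] I) X) (RTensor A (A ⊗[k] I) X) (RTensor A (A ⊗[k] I) X) _
              (QuotientAddGroup.mk w) (QuotientAddGroup.mk w') := rfl
        erw [hq, map_add, map_add, hw, hw']
  right_inv := by
    intro t
    induction t using TensorProduct.induction_on with
    | zero => simp
    | tmul i x =>
      rw [indBwd_tmul, indFwd_mk, phi_tmul, one_smul]
    | add t t' ht ht' => rw [map_add, map_add, ht, ht']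
  map_add' := map_add _

/-- naturality of `indEquiv` in `X` -/
lemma indEquiv_map {X' : Type u} [AddCommGroup X'] [Module A X'] [Module k X']
    [IsScalarTower k A X'] (f : X →ₗ[A] X') (fk : X →ₗ[k] X') (hfk : ∀ x, fk x = f x)
    (q : RTensor A (A ⊗[k] I) X) :
    indEquiv k A I X' (RTensor.map A (A ⊗[k] I) f q) =
      LinearMap.lTensor I fk (indEquiv k A I X q) := by
  induction q using QuotientAddGroup.induction_on with
  | H w =>
    induction w using TensorProduct.induction_on with
    | zero =>
      show indEquiv k A I X' (RTensor.map A (A ⊗[k] I) f (0 : RTensor A (A ⊗[k] I) X)) =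
        LinearMap.lTensor I fk (indEquiv k A I X (0 : RTensor A (A ⊗[k] I) X))
      simp
    | tmul z x =>
      show indEquiv k A I X' (QuotientAddGroup.mk (z ⊗ₜ[ℤ] f x)) = _
      show phi k A I X' (f x) z = LinearMap.lTensor I fk (phi k A I X x z)
      induction z using TensorProduct.induction_on with
      | zero => simp
      | tmul a i =>
        rw [phi_tmul, phi_tmul]
        rw [LinearMap.lTensor_tmul, hfk, f.map_smul]
      | add z z' hz hz' => rw [map_add, map_add, map_add, hz, hz']
    | add w w' hw hw' =>
      have hq : (QuotientAddGroup.mk (w + w') : RTensor A (A ⊗[k] I) X)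
          = @HAdd.hAdd (RTensor A (A ⊗[k] I) X) (RTensor A (A ⊗[k] I) X) (RTensor A (A ⊗[k] I) X) _
              (QuotientAddGroup.mk w) (QuotientAddGroup.mk w') := rfl
      erw [hq, map_add, map_add, map_add, hw, hw']
      exact (map_add _ _ _).symm

/-- the induced `Aᵐᵒᵖ`-linear map on `A ⊗ₖ -` -/
noncomputable def indMap {I' : Type u} [AddCommGroup I'] [Module k I'] (f : I →ₗ[k] I') :
    (A ⊗[k] I) →ₗ[Aᵐᵒᵖ] (A ⊗[k] I') where
  toFun := LinearMap.lTensor A f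
  map_add' := map_add _
  map_smul' := fun r z => by
    simp only [RingHom.id_apply]
    induction z using TensorProduct.induction_on with
    | zero => simp
    | tmul a i =>
      rw [TensorProduct.smul_tmul', LinearMap.lTensor_tmul, LinearMap.lTensor_tmul,
        TensorProduct.smul_tmul']
    | add z z' hz hz' => rw [smul_add, map_add, map_add, hz, hz', smul_add]

/-- naturality of `indEquiv` in `I` -/
lemma indEquiv_mapLeft {I' : Type u} [AddCommGroup I'] [Module k I'] (f : I →ₗ[k] I')
    (q : RTensor A (A ⊗[k] I) X) :
    indEquiv k A I' X (RTensor.mapLeft A (indMap k A I f) X q) =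
      LinearMap.rTensor X f (indEquiv k A I X q) := by
  induction q using QuotientAddGroup.induction_on with
  | H w =>
    induction w using TensorProduct.induction_on with
    | zero =>
      show indEquiv k A I' X (RTensor.mapLeft A (indMap k A I f) X (0 : RTensor A (A ⊗[k] I) X)) =
        LinearMap.rTensor X f (indEquiv k A I X (0 : RTensor A (A ⊗[k] I) X))
      simp
    | tmul z x =>
      show indEquiv k A I' X (QuotientAddGroup.mk ((LinearMap.lTensor A f z) ⊗ₜ[ℤ] x)) = _
      show phi k A I' X x (LinearMap.lTensor A f z) = LinearMap.rTensor X f (phi k A I X x z)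
      induction z using TensorProduct.induction_on with
      | zero => simp
      | tmul a i => rw [LinearMap.lTensor_tmul, phi_tmul, phi_tmul, LinearMap.rTensor_tmul]
      | add z z' hz hz' =>
        rw [map_add, map_add, map_add, hz, hz']
        exact (map_add _ _ _).symm
    | add w w' hw hw' =>
      have hq : (QuotientAddGroup.mk (w + w') : RTensor A (A ⊗[k] I) X)
          = @HAdd.hAdd (RTensor A (A ⊗[k] I) X) (RTensor A (A ⊗[k] I) X) (RTensor A (A ⊗[k] I) X) _
              (QuotientAddGroup.mk w) (QuotientAddGroup.mk w') := rfl
      erw [hq, map_add, map_add, map_add, hw, hw']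
      exact (map_add _ _ _).symm

/-- restriction of scalars of a flat module along `k → A` with `A` free over `k` is flat -/
lemma flat_restrict [Module.Free k A] (h : ModFlat A X) : Module.Flat k X := by
  rw [Module.Flat.iff_rTensor_preserves_injective_linearMap]
  intro N₁ N₂ _ _ _ _ f hf
  have hLf : Function.Injective (indMap k A N₁ f) :=
    Module.Flat.lTensor_preserves_injective_linearMap (M := A) f hf
  have hinj : Function.Injective
      (RTensor.mapLeft A (indMap k A N₁ f) X) :=
    h (ModuleCat.of Aᵐᵒᵖ (A ⊗[k] N₁)) (ModuleCat.of Aᵐᵒᵖ (A ⊗[k] N₂)) (indMap k A N₁ f) hLf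
  exact inj_congr (indEquiv k A N₁ X).symm (indEquiv k A N₂ X).symm _ _
    (square_symm (indEquiv k A N₁ X) (indEquiv k A N₂ X) _ _
      (fun q => indEquiv_mapLeft k A N₁ X (I' := N₂) f q)) hinj

/-- restriction of scalars of a projective module along `k → A` with `A` free over `k` -/
lemma proj_restrict [Module.Free k A] (h : Module.Projective A X) :
    Module.Projective k X := by
  obtain ⟨s, hs⟩ := h
  refine Module.Projective.of_split (R := k) (M := X →₀ A)
    (s.restrictScalars k) ((Finsupp.linearCombination A (id : X → X)).restrictScalars k) ?_
  ext x
  simpa using hs x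

end Bridge2


section Assembly

variable (k : Type u) [CommRing k] (A : Type u) [Ring A] [Algebra k A]

/-- the `k`-module structure obtained by restriction along `k → A` -/
noncomputable def rmod (X : Type u) [AddCommGroup X] [Module A X] : Module k X :=
  Module.compHom X (algebraMap k A)

lemma rmod_tower (X : Type u) [AddCommGroup X] [Module A X] :
    letI := rmod k A X
    IsScalarTower k A X := by
  letI := rmod k A X
  refine ⟨fun c a x => ?_⟩
  show (c • a) • x = algebraMap k A c • (a • x)
  rw [Algebra.smul_def, mul_smul]

/-- the `k`-linear map underlying an `A`-linear map -/
def kRestrict {X Y : Type u} [AddCommGroup X] [AddCommGroup Y] [Module A X] [Module A Y]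
    [Module k X] [Module k Y] [IsScalarTower k A X] [IsScalarTower k A Y]
    (f : X →ₗ[A] Y) : X →ₗ[k] Y where
  toFun := f
  map_add' := f.map_add
  map_smul' := fun c x => by
    simp only [RingHom.id_apply]
    rw [← algebraMap_smul A c x, f.map_smul, algebraMap_smul]

/-- transfer of the syzygy identification to the restricted complex -/
noncomputable def rangeRestrictEquiv {M X Y : Type u} [AddCommGroup M] [AddCommGroup X]
    [AddCommGroup Y] [Module A M] [Module A X] [Module A Y] [Module k M] [Module k X]
    [Module k Y] [IsScalarTower k A M] [IsScalarTower k A X] [IsScalarTower k A Y]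
    (f : X →ₗ[A] Y) (e : M ≃ₗ[A] LinearMap.range f) :
    M ≃ₗ[k] LinearMap.range (kRestrict k A f) where
  toFun := fun m => ⟨(e m : Y), by
    obtain ⟨x, hx⟩ := (e m).2
    exact ⟨x, hx⟩⟩
  invFun := fun y => e.symm ⟨(y : Y), by
    obtain ⟨x, hx⟩ := y.2
    exact ⟨x, hx⟩⟩
  left_inv := fun m => by
    rw [LinearEquiv.symm_apply_eq]
  right_inv := fun y => by
    apply Subtype.ext
    show ((e (e.symm _) : Y)) = (y : Y)
    rw [LinearEquiv.apply_symm_apply]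
  map_add' := fun a b => by
    apply Subtype.ext
    show (e (a + b) : Y) = (e a : Y) + (e b : Y)
    rw [map_add]
    rfl
  map_smul' := fun c m => by
    apply Subtype.ext
    show (e (c • m) : Y) = c • (e m : Y)
    calc (e (c • m) : Y) = (e (algebraMap k A c • m) : Y) := by rw [algebraMap_smul]
      _ = algebraMap k A c • (e m : Y) := congrArg Subtype.val (map_smul e (algebraMap k A c) m)
      _ = c • (e m : Y) := algebraMap_smul A c _

/-- the key point: over a commutative ring with `sfli k < ∞`, every acyclic complex of flat
modules is totally acyclic. -/
lemma restricted_tensor_acyclic {k : Type u} [CommRing k] (hk : sfli k < ⊤)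
    (F : ℤ → Type u) [∀ n, AddCommGroup (F n)] [∀ n, Module k (F n)]
    (d : ∀ n : ℤ, F (n+1) →ₗ[k] F n) (hflat : ∀ n, Module.Flat k (F n))
    (hex : ∀ n, Function.Exact (d (n+1)) (d n)) :
    ∀ (I : ModuleCat.{u} kᵐᵒᵖ), Module.Injective kᵐᵒᵖ I →
    ∀ n, Function.Exact (RTensor.map k ↥I (d (n+1))) (RTensor.map k ↥I (d n)) := by
  intro I hI n
  letI : Module k ↥I := opmod k ↥I
  have hc : ∀ (r : k) (a : ↥I), op r • a = r • a := opmod_hc k ↥I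
  obtain ⟨m, hres⟩ := exists_fres_of_sfli k hk ↥I hc hI
  have hlt := main_tensor_acyclic m ↥I hres F d hflat hex n
  exact rtMap_exact k ↥I hc _ _ hlt

noncomputable instance monoidAlgebraFree (k G : Type u) [CommRing k] [Group G] :
    Module.Free k (MonoidAlgebra k G) :=
  inferInstance

end Assembly

end Stmt7

end Stmt7Dev

/-- if `sfli k < ∞` then every Gorenstein flat `kG`-module is Gorenstein flat
as a `k`-module, and every PGF `kG`-module is PGF as a `k`-module. -/
theorem stmt7 (k : Type u) [CommRing k] (G : Type u) [Group G] (hk : sfli k < ⊤)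
    (M : Type u) [AddCommGroup M] [Module (MonoidAlgebra k G) M]
    [Module k M] [IsScalarTower k (MonoidAlgebra k G) M] :
    (IsGorensteinFlat (MonoidAlgebra k G) M → IsGorensteinFlat k M) ∧
    (IsPGF (MonoidAlgebra k G) M → IsPGF k M) := by
  constructor
  · rintro ⟨C, n, ⟨e⟩⟩
    letI instK : ∀ m : ℤ, Module k ↥(C.F m) :=
      fun m => Stmt7.rmod k (MonoidAlgebra k G) ↥(C.F m)
    letI instT : ∀ m : ℤ, IsScalarTower k (MonoidAlgebra k G) ↥(C.F m) :=
      fun m => Stmt7.rmod_tower k (MonoidAlgebra k G) ↥(C.F m)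
    have hflat : ∀ m : ℤ, Module.Flat k ↥(C.F m) :=
      fun m => Stmt7.flat_restrict k (MonoidAlgebra k G) ↥(C.F m) (C.flat m)
    let d' : ∀ m : ℤ, ↥(C.F (m+1)) →ₗ[k] ↥(C.F m) :=
      fun m => Stmt7.kRestrict k (MonoidAlgebra k G) (C.d m)
    refine ⟨⟨fun m => ModuleCat.of k ↥(C.F m), d',
      fun m => Stmt7.modFlat_of_flat k ↥(C.F m) (hflat m),
      fun m => C.acyclic m,
      Stmt7.restricted_tensor_acyclic hk (fun m => ↥(C.F m)) d' hflat
        (fun m => C.acyclic m)⟩,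
      n, ⟨Stmt7.rangeRestrictEquiv k (MonoidAlgebra k G) (C.d n) e⟩⟩
  · rintro ⟨C, n, ⟨e⟩⟩
    letI instK : ∀ m : ℤ, Module k ↥(C.F m) :=
      fun m => Stmt7.rmod k (MonoidAlgebra k G) ↥(C.F m)
    letI instT : ∀ m : ℤ, IsScalarTower k (MonoidAlgebra k G) ↥(C.F m) :=
      fun m => Stmt7.rmod_tower k (MonoidAlgebra k G) ↥(C.F m)
    have hproj : ∀ m : ℤ, Module.Projective k ↥(C.F m) :=
      fun m => Stmt7.proj_restrict k (MonoidAlgebra k G) ↥(C.F m) (C.projective m)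
    have hflat : ∀ m : ℤ, Module.Flat k ↥(C.F m) := fun m =>
      haveI := hproj m
      inferInstance
    let d' : ∀ m : ℤ, ↥(C.F (m+1)) →ₗ[k] ↥(C.F m) :=
      fun m => Stmt7.kRestrict k (MonoidAlgebra k G) (C.d m)
    refine ⟨⟨fun m => ModuleCat.of k ↥(C.F m), d',
      hproj,
      fun m => C.acyclic m,
      Stmt7.restricted_tensor_acyclic hk (fun m => ↥(C.F m)) d' hflat
        (fun m => C.acyclic m)⟩,
      n, ⟨Stmt7.rangeRestrictEquiv k (MonoidAlgebra k G) (C.d n) e⟩⟩
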